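/- Let $S$ be a countable state space, $P$ and $\bar P$ two Markov kernels on $S$, $F, \bar F : S \to [0,\infty)$, and let $\pi$ and $\bar\pi$ be stationary distributions of $P$ and $\bar P$ respectively. Define $F^t$ by $F^0 = 0$, $F^{t+1}(n) = F(n) + \sum_m P(n,m) F^t(m)$, and suppose $F^t(n)/t \to \mathcal{F} := \sum_n \pi(n) F(n)$ for all $n$, and $\bar{\mathcal{F}} := \sum_n \bar\pi(n) \bar F(n) < \infty$. If $G : S \to [0,\infty)$ satisfies, for all $n \in S$ and all $t \ge 0$, $\big| \bar F(n) - F(n) + \sum_m (\bar P(n,m) - P(n,m))(F^t(m) - F^t(n)) \big| \le G(n)$, then $|\bar{\mathcal{F}} - \mathcal{F}| \le \sum_n \bar\pi(n) G(n)$ (assuming the right-hand side and all sums converge absolutely). -/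

import Mathlib

open scoped ENNReal
open Filter

theorem stmt13 {S : Type*} [Countable S]
    (P Pb : S → S → ℝ) (F Fb G : S → ℝ) (π πb : S → ℝ)
    (hPnn : ∀ n m, 0 ≤ P n m) (hProw : ∀ n, ∑' m, P n m = 1)
    (hPbnn : ∀ n m, 0 ≤ Pb n m) (hPbrow : ∀ n, ∑' m, Pb n m = 1)
    (hπnn : ∀ n, 0 ≤ π n) (hπsum : ∑' n, π n = 1)
    (hπstat : ∀ n, ∑' m, π m * P m n = π n)
    (hπbnn : ∀ n, 0 ≤ πb n) (hπbsum : ∑' n, πb n = 1)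
    (hπbstat : ∀ n, ∑' m, πb m * Pb m n = πb n)
    (hFnn : ∀ n, 0 ≤ F n) (hFbnn : ∀ n, 0 ≤ Fb n) (hGnn : ∀ n, 0 ≤ G n)
    (Ft : ℕ → S → ℝ)
    (hFt0 : ∀ n, Ft 0 n = 0)
    (hFtS : ∀ t n, Ft (t + 1) n = F n + ∑' m, P n m * Ft t m)
    (hconv : ∀ n, Filter.Tendsto (fun t : ℕ => Ft t n / t) Filter.atTop
      (nhds (∑' n, π n * F n)))
    (hFbfin : Summable (fun n => πb n * Fb n))
    (hGfin : Summable (fun n => πb n * G n))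
    (hbias : ∀ t n, Summable (fun m => (Pb n m - P n m) * (Ft t m - Ft t n)))
    (hG : ∀ (n : S) (t : ℕ),
      |Fb n - F n + ∑' m, (Pb n m - P n m) * (Ft t m - Ft t n)| ≤ G n) :
    |(∑' n, πb n * Fb n) - ∑' n, π n * F n| ≤ ∑' n, πb n * G n := by
  classical
  rcases isEmpty_or_nonempty S with hS | hS
  · exfalso
    have h0 : (∑' n, π n) = 0 := by
      rw [show (fun n : S => π n) = fun _ => (0 : ℝ) from funext fun n => isEmptyElim n]
      exact tsum_zero
    rw [hπsum] at h0; norm_num at h0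
  set Fc : ℝ := ∑' n, π n * F n with hFcdef
  set Fbar : ℝ := ∑' n, πb n * Fb n with hFbardef
  set Gbar : ℝ := ∑' n, πb n * G n with hGbardef
  -- basic summability facts
  have hsum_of_one : ∀ (f : S → ℝ), (∑' n, f n) = 1 → Summable f := by
    intro f h1
    by_contra hc
    rw [tsum_eq_zero_of_not_summable hc] at h1; norm_num at h1
  have hPS : ∀ n, Summable (P n) := fun n => hsum_of_one _ (hProw n)
  have hPbS : ∀ n, Summable (Pb n) := fun n => hsum_of_one _ (hPbrow n)
  have hπbS : Summable πb := hsum_of_one _ hπbsum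
  have hPble1 : ∀ n m, Pb n m ≤ 1 := fun n m =>
    (hPbrow n) ▸ Summable.le_tsum (hPbS n) m (fun j _ => hPbnn n j)
  have hFtnn : ∀ t n, 0 ≤ Ft t n := by
    intro t
    induction t with
    | zero => intro n; rw [hFt0]
    | succ t ih =>
        intro n; rw [hFtS]
        exact add_nonneg (hFnn n) (tsum_nonneg fun m => mul_nonneg (hPnn n m) (ih m))
  have hFcnn : 0 ≤ Fc := by
    obtain ⟨n0⟩ := hS
    exact ge_of_tendsto (hconv n0)
      (Filter.Eventually.of_forall fun t => div_nonneg (hFtnn t n0) (Nat.cast_nonneg t))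
  have hFbarnn : 0 ≤ Fbar := tsum_nonneg fun n => mul_nonneg (hπbnn n) (hFbnn n)
  have hGbarnn : 0 ≤ Gbar := tsum_nonneg fun n => mul_nonneg (hπbnn n) (hGnn n)
  -- ENNReal quantities
  set p : S → ℝ≥0∞ := fun n => ENNReal.ofReal (πb n) with hpdef
  set pb : S → S → ℝ≥0∞ := fun n m => ENNReal.ofReal (Pb n m) with hpbdef
  have hpzero : ∀ n, πb n = 0 → p n = 0 := fun n h => by
    simp [hpdef, h]
  have hpne : ∀ n, πb n ≠ 0 → p n ≠ 0 := by
    intro n h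
    simp only [hpdef, ne_eq, ENNReal.ofReal_eq_zero, not_le]
    exact lt_of_le_of_ne (hπbnn n) (Ne.symm h)
  set K : (S → ℝ≥0∞) → S → ℝ≥0∞ := fun f n => ∑' m, pb n m * f m with hKdef
  set aE : ℕ → ℝ≥0∞ := fun t => ∑' n, p n * ENNReal.ofReal (Ft t n) with haEdef
  have hrowE : ∀ n, ∑' m, pb n m = 1 := by
    intro n
    rw [hpbdef]
    rw [← ENNReal.ofReal_tsum_of_nonneg (hPbnn n) (hPbS n), hPbrow n, ENNReal.ofReal_one]
  have hstatE : ∀ m, ∑' n, p n * pb n m = p m := by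
    intro m
    have hs : Summable (fun n => πb n * Pb n m) :=
      Summable.of_nonneg_of_le (fun n => mul_nonneg (hπbnn n) (hPbnn n m))
        (fun n => mul_le_of_le_one_right (hπbnn n) (hPble1 n m)) hπbS
    calc ∑' n, p n * pb n m = ∑' n, ENNReal.ofReal (πb n * Pb n m) :=
          tsum_congr fun n => (ENNReal.ofReal_mul (hπbnn n)).symm
      _ = ENNReal.ofReal (∑' n, πb n * Pb n m) :=
          (ENNReal.ofReal_tsum_of_nonneg (fun n => mul_nonneg (hπbnn n) (hPbnn n m)) hs).symm
      _ = p m := by rw [hπbstat m]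
  have hKstatE : ∀ f : S → ℝ≥0∞, ∑' n, p n * K f n = ∑' n, p n * f n := by
    intro f
    calc ∑' n, p n * K f n = ∑' n, ∑' m, p n * pb n m * f m := by
          refine tsum_congr fun n => ?_
          rw [hKdef, ← ENNReal.tsum_mul_left]
          exact tsum_congr fun m => (mul_assoc _ _ _).symm
      _ = ∑' m, ∑' n, p n * pb n m * f m := ENNReal.tsum_comm
      _ = ∑' m, (∑' n, p n * pb n m) * f m :=
          tsum_congr fun m => ENNReal.tsum_mul_right
      _ = ∑' n, p n * f n := tsum_congr fun m => by rw [hstatE m]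
  -- rewrite of the hG hypothesis
  have hGrw : ∀ t n, Summable (fun m => (Pb n m - P n m) * Ft t m) ∧
      |Fb n - F n + ∑' m, (Pb n m - P n m) * Ft t m| ≤ G n := by
    intro t n
    have hd : Summable (fun m => (Pb n m - P n m) * Ft t n) :=
      ((hPbS n).sub (hPS n)).mul_right _
    have hc := hbias t n
    have he : Summable (fun m => (Pb n m - P n m) * Ft t m) := by
      have h2 := hc.add hd
      refine h2.congr fun m => ?_
      ring
    refine ⟨he, ?_⟩
    have h3 : (∑' m, (Pb n m - P n m) * Ft t n) = 0 := by
      rw [tsum_mul_right, Summable.tsum_sub (hPbS n) (hPS n), hPbrow, hProw]; ring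
    have h2 : ∑' m, (Pb n m - P n m) * (Ft t m - Ft t n)
        = ∑' m, (Pb n m - P n m) * Ft t m := by
      calc ∑' m, (Pb n m - P n m) * (Ft t m - Ft t n)
          = ∑' m, ((Pb n m - P n m) * Ft t m - (Pb n m - P n m) * Ft t n) :=
            tsum_congr fun m => by ring
        _ = (∑' m, (Pb n m - P n m) * Ft t m) - ∑' m, (Pb n m - P n m) * Ft t n :=
            Summable.tsum_sub he hd
        _ = ∑' m, (Pb n m - P n m) * Ft t m := by rw [h3, sub_zero]
    have := hG n t
    rw [h2] at this
    exact this
  -- key per-state facts when the weighted sum is finite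
  set Q : ℕ → S → ℝ := fun t n => ∑' m, Pb n m * Ft t m with hQdef
  have hQnn : ∀ t n, 0 ≤ Q t n := fun t n =>
    tsum_nonneg fun m => mul_nonneg (hPbnn n m) (hFtnn t m)
  have hgood : ∀ t n, aE t ≠ ⊤ → πb n ≠ 0 →
      Summable (fun m => Pb n m * Ft t m) ∧
      ENNReal.ofReal (Q t n) = K (fun m => ENNReal.ofReal (Ft t m)) n ∧
      |Fb n + Q t n - Ft (t + 1) n| ≤ G n := by
    intro t n ha hn
    have hpn : p n ≠ 0 := hpne n hn
    have hfub : ∑' n', p n' * K (fun m => ENNReal.ofReal (Ft t m)) n' = aE t :=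
      hKstatE _
    have hfin : K (fun m => ENNReal.ofReal (Ft t m)) n ≠ ⊤ := by
      intro htop
      apply ha
      have hle : p n * K (fun m => ENNReal.ofReal (Ft t m)) n
          ≤ ∑' n', p n' * K (fun m => ENNReal.ofReal (Ft t m)) n' := ENNReal.le_tsum n
      rw [htop, ENNReal.mul_top hpn, hfub, top_le_iff] at hle
      exact hle
    have hsum : Summable (fun m => Pb n m * Ft t m) := by
      have h1 : (∑' m, pb n m * ENNReal.ofReal (Ft t m)) ≠ ⊤ := hfin
      have h2 := ENNReal.summable_toReal h1
      refine h2.congr fun m => ?_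
      rw [ENNReal.toReal_mul, hpbdef, ENNReal.toReal_ofReal (hPbnn n m),
        ENNReal.toReal_ofReal (hFtnn t m)]
    have hQof : ENNReal.ofReal (Q t n) = K (fun m => ENNReal.ofReal (Ft t m)) n := by
      rw [hQdef]
      rw [ENNReal.ofReal_tsum_of_nonneg (fun m => mul_nonneg (hPbnn n m) (hFtnn t m)) hsum]
      exact tsum_congr fun m => ENNReal.ofReal_mul (hPbnn n m)
    obtain ⟨he, hGe⟩ := hGrw t n
    have hpf : Summable (fun m => P n m * Ft t m) := by
      have h2 := hsum.sub he
      refine h2.congr fun m => ?_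
      ring
    have hsplit : (∑' m, (Pb n m - P n m) * Ft t m) = Q t n - ∑' m, P n m * Ft t m := by
      rw [hQdef, ← Summable.tsum_sub hsum hpf]
      exact tsum_congr fun m => by ring
    refine ⟨hsum, hQof, ?_⟩
    rw [hsplit] at hGe
    have hFt1 : Ft (t+1) n = F n + ∑' m, P n m * Ft t m := hFtS t n
    calc |Fb n + Q t n - Ft (t + 1) n|
        = |Fb n - F n + (Q t n - ∑' m, P n m * Ft t m)| := by rw [hFt1]; ring_nf
      _ ≤ G n := hGe
  have hFbE : ∑' n, p n * ENNReal.ofReal (Fb n) = ENNReal.ofReal Fbar := by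
    calc ∑' n, p n * ENNReal.ofReal (Fb n) = ∑' n, ENNReal.ofReal (πb n * Fb n) :=
          tsum_congr fun n => (ENNReal.ofReal_mul (hπbnn n)).symm
      _ = ENNReal.ofReal Fbar :=
          (ENNReal.ofReal_tsum_of_nonneg (fun n => mul_nonneg (hπbnn n) (hFbnn n)) hFbfin).symm
  have hGbE : ∑' n, p n * ENNReal.ofReal (G n) = ENNReal.ofReal Gbar := by
    calc ∑' n, p n * ENNReal.ofReal (G n) = ∑' n, ENNReal.ofReal (πb n * G n) :=
          tsum_congr fun n => (ENNReal.ofReal_mul (hπbnn n)).symm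
      _ = ENNReal.ofReal Gbar :=
          (ENNReal.ofReal_tsum_of_nonneg (fun n => mul_nonneg (hπbnn n) (hGnn n)) hGfin).symm
  have hstep : ∀ t, aE t ≠ ⊤ →
      (aE (t+1) ≤ ENNReal.ofReal Fbar + ENNReal.ofReal Gbar + aE t ∧
       ENNReal.ofReal Fbar + aE t ≤ aE (t+1) + ENNReal.ofReal Gbar) := by
    intro t ha
    have hQa : ∑' n, p n * ENNReal.ofReal (Q t n) = aE t := by
      simp only [haEdef]
      rw [← hKstatE (fun m => ENNReal.ofReal (Ft t m))]
      refine tsum_congr fun n => ?_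
      by_cases hn : πb n = 0
      · rw [hpzero n hn, zero_mul, zero_mul]
      · rw [(hgood t n ha hn).2.1]
    constructor
    · calc aE (t+1)
          ≤ ∑' n, (p n * ENNReal.ofReal (Fb n) + p n * ENNReal.ofReal (G n)
              + p n * ENNReal.ofReal (Q t n)) := by
            refine Summable.tsum_le_tsum (fun n => ?_) ENNReal.summable ENNReal.summable
            by_cases hn : πb n = 0
            · rw [hpzero n hn]; simp
            · have hkey := (hgood t n ha hn).2.2
              have h1 : Ft (t+1) n ≤ Fb n + G n + Q t n := by
                have := abs_le.1 hkey
                linarith [this.2]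
              calc p n * ENNReal.ofReal (Ft (t+1) n)
                  ≤ p n * ENNReal.ofReal (Fb n + G n + Q t n) :=
                    mul_le_mul_right (ENNReal.ofReal_le_ofReal h1) _
                _ ≤ p n * (ENNReal.ofReal (Fb n) + ENNReal.ofReal (G n)
                    + ENNReal.ofReal (Q t n)) := by
                    refine mul_le_mul_right ?_ _
                    calc ENNReal.ofReal (Fb n + G n + Q t n)
                        ≤ ENNReal.ofReal (Fb n + G n) + ENNReal.ofReal (Q t n) :=
                          ENNReal.ofReal_add_le
                      _ ≤ ENNReal.ofReal (Fb n) + ENNReal.ofReal (G n)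
                          + ENNReal.ofReal (Q t n) :=
                          add_le_add_left ENNReal.ofReal_add_le _
                _ = p n * ENNReal.ofReal (Fb n) + p n * ENNReal.ofReal (G n)
                    + p n * ENNReal.ofReal (Q t n) := by ring
        _ = ENNReal.ofReal Fbar + ENNReal.ofReal Gbar + aE t := by
            rw [ENNReal.tsum_add, ENNReal.tsum_add, hFbE, hGbE, hQa]
    · calc ENNReal.ofReal Fbar + aE t
          = ∑' n, (p n * ENNReal.ofReal (Fb n) + p n * ENNReal.ofReal (Q t n)) := by
            rw [ENNReal.tsum_add, hFbE, hQa]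
        _ ≤ ∑' n, (p n * ENNReal.ofReal (Ft (t+1) n) + p n * ENNReal.ofReal (G n)) := by
            refine Summable.tsum_le_tsum (fun n => ?_) ENNReal.summable ENNReal.summable
            by_cases hn : πb n = 0
            · rw [hpzero n hn]; simp
            · have hkey := (hgood t n ha hn).2.2
              have h1 : Fb n + Q t n ≤ Ft (t+1) n + G n := by
                have := abs_le.1 hkey
                linarith [this.1]
              calc p n * ENNReal.ofReal (Fb n) + p n * ENNReal.ofReal (Q t n)
                  = p n * (ENNReal.ofReal (Fb n) + ENNReal.ofReal (Q t n)) := by ring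
                _ = p n * ENNReal.ofReal (Fb n + Q t n) := by
                    rw [ENNReal.ofReal_add (hFbnn n) (hQnn t n)]
                _ ≤ p n * ENNReal.ofReal (Ft (t+1) n + G n) :=
                    mul_le_mul_right (ENNReal.ofReal_le_ofReal h1) _
                _ ≤ p n * (ENNReal.ofReal (Ft (t+1) n) + ENNReal.ofReal (G n)) :=
                    mul_le_mul_right ENNReal.ofReal_add_le _
                _ = p n * ENNReal.ofReal (Ft (t+1) n) + p n * ENNReal.ofReal (G n) := by
                    ring
        _ = aE (t+1) + ENNReal.ofReal Gbar := by
            rw [ENNReal.tsum_add, hGbE]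
  have haE0 : aE 0 = 0 := by
    rw [haEdef]
    simp [hFt0]
  have haEfin : ∀ t, aE t ≠ ⊤ := by
    intro t
    induction t with
    | zero => rw [haE0]; exact ENNReal.zero_ne_top
    | succ t ih =>
        exact ne_top_of_le_ne_top (by
          exact ENNReal.add_ne_top.2 ⟨ENNReal.add_ne_top.2
            ⟨ENNReal.ofReal_ne_top, ENNReal.ofReal_ne_top⟩, ih⟩) ((hstep t ih).1)
  have hUn : ∀ T : ℕ, aE T ≤ (T : ℝ≥0∞) * (ENNReal.ofReal Fbar + ENNReal.ofReal Gbar) := by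
    intro T
    induction T with
    | zero => rw [haE0]; simp
    | succ T ih =>
        calc aE (T+1) ≤ ENNReal.ofReal Fbar + ENNReal.ofReal Gbar + aE T := (hstep T (haEfin T)).1
          _ ≤ ENNReal.ofReal Fbar + ENNReal.ofReal Gbar
              + (T : ℝ≥0∞) * (ENNReal.ofReal Fbar + ENNReal.ofReal Gbar) := by
                exact add_le_add_right ih _
          _ = ((T:ℕ)+1 : ℝ≥0∞) * (ENNReal.ofReal Fbar + ENNReal.ofReal Gbar) := by ring
          _ = ((T+1 : ℕ) : ℝ≥0∞) * (ENNReal.ofReal Fbar + ENNReal.ofReal Gbar) := by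
                rw [Nat.cast_succ]
  have hLn : ∀ T : ℕ, (T : ℝ≥0∞) * ENNReal.ofReal Fbar ≤ aE T + (T : ℝ≥0∞) * ENNReal.ofReal Gbar := by
    intro T
    induction T with
    | zero => simp
    | succ T ih =>
        have h1 := (hstep T (haEfin T)).2
        calc ((T+1 : ℕ) : ℝ≥0∞) * ENNReal.ofReal Fbar
            = ENNReal.ofReal Fbar + (T : ℝ≥0∞) * ENNReal.ofReal Fbar := by
              rw [Nat.cast_succ]; ring
          _ ≤ ENNReal.ofReal Fbar + (aE T + (T : ℝ≥0∞) * ENNReal.ofReal Gbar) := add_le_add_right ih _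
          _ = (ENNReal.ofReal Fbar + aE T) + (T : ℝ≥0∞) * ENNReal.ofReal Gbar := by ring
          _ ≤ (aE (T+1) + ENNReal.ofReal Gbar) + (T : ℝ≥0∞) * ENNReal.ofReal Gbar :=
              add_le_add_left h1 _
          _ = aE (T+1) + ((T+1 : ℕ) : ℝ≥0∞) * ENNReal.ofReal Gbar := by
              rw [Nat.cast_succ]; ring
  -- finite-set limits
  have htendA : ∀ A : Finset S, Filter.Tendsto (fun T : ℕ => ∑ n ∈ A, πb n * (Ft T n / T))
      Filter.atTop (nhds ((∑ n ∈ A, πb n) * Fc)) := by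
    intro A
    have h1 := tendsto_finset_sum A (fun n _ => (hconv n).const_mul (πb n))
    rw [← Finset.sum_mul] at h1
    exact h1
  -- direction 1 : Fc ≤ Fbar + Gbar
  have hdir1 : Fc ≤ Fbar + Gbar := by
    have hUreal : ∀ (A : Finset S) (T : ℕ), 1 ≤ T →
        ∑ n ∈ A, πb n * (Ft T n / T) ≤ Fbar + Gbar := by
      intro A T hT
      have hTpos : (0:ℝ) < T := by exact_mod_cast hT
      have h1 : ENNReal.ofReal (∑ n ∈ A, πb n * Ft T n)
          ≤ ENNReal.ofReal ((T:ℝ) * (Fbar + Gbar)) := by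
        calc ENNReal.ofReal (∑ n ∈ A, πb n * Ft T n)
            = ∑ n ∈ A, p n * ENNReal.ofReal (Ft T n) := by
              rw [ENNReal.ofReal_sum_of_nonneg
                (fun n _ => mul_nonneg (hπbnn n) (hFtnn T n))]
              exact Finset.sum_congr rfl fun n _ => ENNReal.ofReal_mul (hπbnn n)
          _ ≤ aE T := by
              simp only [haEdef]
              exact Summable.sum_le_tsum A (fun n _ => zero_le) ENNReal.summable
          _ ≤ (T : ℝ≥0∞) * (ENNReal.ofReal Fbar + ENNReal.ofReal Gbar) := hUn T
          _ = ENNReal.ofReal ((T:ℝ) * (Fbar + Gbar)) := by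
              rw [← ENNReal.ofReal_add hFbarnn hGbarnn, ← ENNReal.ofReal_natCast T,
                ← ENNReal.ofReal_mul (Nat.cast_nonneg T)]
      have h2 : ∑ n ∈ A, πb n * Ft T n ≤ (T:ℝ) * (Fbar + Gbar) :=
        (ENNReal.ofReal_le_ofReal_iff (by positivity)).1 h1
      calc ∑ n ∈ A, πb n * (Ft T n / T) = (∑ n ∈ A, πb n * Ft T n) / T := by
            rw [Finset.sum_div]
            exact Finset.sum_congr rfl fun n _ => (mul_div_assoc _ _ _).symm
        _ ≤ Fbar + Gbar := by
            rw [div_le_iff₀ hTpos]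
            linarith
    have hdir1A : ∀ A : Finset S, (∑ n ∈ A, πb n) * Fc ≤ Fbar + Gbar := fun A =>
      le_of_tendsto (htendA A) (Filter.eventually_atTop.2 ⟨1, fun T hT => hUreal A T hT⟩)
    have ht : Filter.Tendsto (fun A : Finset S => (∑ n ∈ A, πb n) * Fc)
        Filter.atTop (nhds (1 * Fc)) := by
      have h1 : Filter.Tendsto (fun A : Finset S => ∑ n ∈ A, πb n)
          Filter.atTop (nhds 1) := by
        have := hπbS.hasSum
        rw [hπbsum] at this
        exact this
      exact h1.mul_const Fc
    rw [one_mul] at ht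
    exact le_of_tendsto ht (Filter.Eventually.of_forall hdir1A)
  -- direction 2 : Fbar ≤ Fc + Gbar
  have htsum_split : ∀ (g : S → ℝ≥0∞) (A : Finset S),
      ∑' n, g n = (∑ n ∈ A, g n) + ∑' n, (if n ∈ A then 0 else g n) := by
    intro g A
    calc ∑' n, g n
        = ∑' n, ((if n ∈ A then g n else 0) + (if n ∈ A then 0 else g n)) :=
          tsum_congr fun n => by split_ifs <;> simp
      _ = (∑' n, (if n ∈ A then g n else 0)) + ∑' n, (if n ∈ A then 0 else g n) :=
          ENNReal.tsum_add
      _ = (∑ n ∈ A, g n) + ∑' n, (if n ∈ A then 0 else g n) := by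
          rw [tsum_eq_sum (s := A) (fun b hb => if_neg hb)]
          congr 1
          exact Finset.sum_congr rfl fun n hn => if_pos hn
  have hdir2 : Fbar ≤ Fc + Gbar := by
    refine le_of_forall_pos_le_add fun ε hε => ?_
    set δ : ℝ := ε / 2 with hδdef
    have hδ : 0 < δ := by positivity
    -- choose the truncation level M via a finite set B
    have hh : Summable (fun n => πb n * (Fb n + G n)) := by
      refine (hFbfin.add hGfin).congr fun n => ?_
      ring
    have hhsum : ∑' n, πb n * (Fb n + G n) = Fbar + Gbar := by
      rw [hFbardef, hGbardef, ← Summable.tsum_add hFbfin hGfin]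
      exact tsum_congr fun n => by ring
    obtain ⟨B, hB⟩ : ∃ B : Finset S, (Fbar + Gbar) - δ < ∑ n ∈ B, πb n * (Fb n + G n) := by
      have h1 := hh.hasSum
      rw [hhsum] at h1
      have h2 : Filter.Tendsto (fun A : Finset S => ∑ n ∈ A, πb n * (Fb n + G n))
          Filter.atTop (nhds (Fbar + Gbar)) := h1
      exact (h2.eventually (eventually_gt_nhds (by linarith))).exists
    set M : ℝ := ∑ n ∈ B, (Fb n + G n) with hMdef
    have hM0 : 0 ≤ M := Finset.sum_nonneg fun n _ => add_nonneg (hFbnn n) (hGnn n)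
    have hMB : ∀ n ∈ B, Fb n + G n ≤ M := fun n hn =>
      Finset.single_le_sum (fun i _ => add_nonneg (hFbnn i) (hGnn i)) hn
    set H1 : S → ℝ≥0∞ := fun n =>
      if Fb n + G n ≤ M then ENNReal.ofReal (Fb n + G n) else 0 with hH1def
    set H2 : S → ℝ≥0∞ := fun n =>
      if Fb n + G n ≤ M then 0 else ENNReal.ofReal (Fb n + G n) with hH2def
    have hH12 : ∀ n, H1 n + H2 n = ENNReal.ofReal (Fb n + G n) := by
      intro n
      simp only [hH1def, hH2def]
      split_ifs <;> simp
    have hH1le : ∀ n, H1 n ≤ ENNReal.ofReal M := by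
      intro n
      simp only [hH1def]
      split_ifs with h
      · exact ENNReal.ofReal_le_ofReal h
      · exact zero_le
    have hpH : ∀ n, p n * ENNReal.ofReal (Fb n + G n) = ENNReal.ofReal (πb n * (Fb n + G n)) :=
      fun n => (ENNReal.ofReal_mul (hπbnn n)).symm
    have htot : ∑' n, p n * ENNReal.ofReal (Fb n + G n) = ENNReal.ofReal (Fbar + Gbar) := by
      rw [tsum_congr hpH,
        ← ENNReal.ofReal_tsum_of_nonneg
          (fun n => mul_nonneg (hπbnn n) (add_nonneg (hFbnn n) (hGnn n))) hh, hhsum]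
    -- tail bound for the truncated part
    have htailB : ∑' n, p n * H2 n ≤ ENNReal.ofReal δ := by
      have hpt : ∀ n, p n * H2 n ≤ (if n ∈ B then 0 else p n * ENNReal.ofReal (Fb n + G n)) := by
        intro n
        split_ifs with hn
        · simp only [hH2def, if_pos (hMB n hn), mul_zero, le_refl]
        · exact mul_le_mul_right (by simp only [hH2def]; split_ifs <;> simp) _
      refine le_trans (Summable.tsum_le_tsum hpt ENNReal.summable ENNReal.summable) ?_
      have hsplitB := htsum_split (fun n => p n * ENNReal.ofReal (Fb n + G n)) B
      rw [htot] at hsplitB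
      have hBsum : (∑ n ∈ B, p n * ENNReal.ofReal (Fb n + G n))
          = ENNReal.ofReal (∑ n ∈ B, πb n * (Fb n + G n)) := by
        rw [ENNReal.ofReal_sum_of_nonneg
          (fun n _ => mul_nonneg (hπbnn n) (add_nonneg (hFbnn n) (hGnn n)))]
        exact Finset.sum_congr rfl fun n _ => hpH n
      rw [hBsum] at hsplitB
      have hkey : ENNReal.ofReal (∑ n ∈ B, πb n * (Fb n + G n))
            + ∑' n, (if n ∈ B then 0 else p n * ENNReal.ofReal (Fb n + G n))
          ≤ ENNReal.ofReal (∑ n ∈ B, πb n * (Fb n + G n)) + ENNReal.ofReal δ := by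
        rw [← hsplitB, ← ENNReal.ofReal_add (Finset.sum_nonneg
          (fun n _ => mul_nonneg (hπbnn n) (add_nonneg (hFbnn n) (hGnn n)))) hδ.le]
        exact ENNReal.ofReal_le_ofReal (by linarith)
      exact (ENNReal.add_le_add_iff_left ENNReal.ofReal_ne_top).1 hkey
    -- choose the finite set A
    set δ' : ℝ := δ / (M + 1) with hδ'def
    have hδ' : 0 < δ' := div_pos hδ (by linarith)
    obtain ⟨A, hA⟩ : ∃ A : Finset S, 1 - δ' < ∑ n ∈ A, πb n := by
      have h1 := hπbS.hasSum
      rw [hπbsum] at h1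
      have h2 : Filter.Tendsto (fun A : Finset S => ∑ n ∈ A, πb n)
          Filter.atTop (nhds 1) := h1
      exact (h2.eventually (eventually_gt_nhds (by linarith))).exists
    have hApc : ∑' n, (if n ∈ A then 0 else p n) ≤ ENNReal.ofReal δ' := by
      have hsplitA := htsum_split p A
      have htotp : ∑' n, p n = ENNReal.ofReal 1 := by
        rw [hpdef, ← ENNReal.ofReal_tsum_of_nonneg hπbnn hπbS, hπbsum]
      have hAsum : (∑ n ∈ A, p n) = ENNReal.ofReal (∑ n ∈ A, πb n) := by
        rw [ENNReal.ofReal_sum_of_nonneg (fun n _ => hπbnn n)]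
      rw [htotp, hAsum] at hsplitA
      have hkey : ENNReal.ofReal (∑ n ∈ A, πb n) + ∑' n, (if n ∈ A then 0 else p n)
          ≤ ENNReal.ofReal (∑ n ∈ A, πb n) + ENNReal.ofReal δ' := by
        rw [← hsplitA, ← ENNReal.ofReal_add (Finset.sum_nonneg (fun n _ => hπbnn n)) hδ'.le]
        exact ENNReal.ofReal_le_ofReal (by linarith)
      exact (ENNReal.add_le_add_iff_left ENNReal.ofReal_ne_top).1 hkey
    -- closedness of the support of πb
    have hclosed : ∀ n m, πb n ≠ 0 → πb m = 0 → Pb n m = 0 := by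
      intro n m hn hm
      have hs : Summable (fun k => πb k * Pb k m) :=
        Summable.of_nonneg_of_le (fun k => mul_nonneg (hπbnn k) (hPbnn k m))
          (fun k => mul_le_of_le_one_right (hπbnn k) (hPble1 k m)) hπbS
      have h1 : πb n * Pb n m ≤ ∑' k, πb k * Pb k m :=
        Summable.le_tsum hs n (fun j _ => mul_nonneg (hπbnn j) (hPbnn j m))
      rw [hπbstat m, hm] at h1
      have h2 : πb n * Pb n m = 0 :=
        le_antisymm h1 (mul_nonneg (hπbnn n) (hPbnn n m))
      rcases mul_eq_zero.1 h2 with h | h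
      · exact absurd h hn
      · exact h
    -- iterated tail process W2
    let W2 : ℕ → S → ℝ≥0∞ := fun t =>
      Nat.rec (motive := fun _ => S → ℝ≥0∞) (fun _ => 0) (fun _ ih n => H2 n + K ih n) t
    have hW20 : ∀ n, W2 0 n = 0 := fun n => rfl
    have hW2S : ∀ t n, W2 (t+1) n = H2 n + K (W2 t) n := fun t n => rfl
    -- K of a constant plus a function
    have hKconst : ∀ (c : ℝ≥0∞) (f : S → ℝ≥0∞) (n : S),
        K (fun m => c + f m) n = c + K f n := by
      intro c f n
      simp only [hKdef]
      calc ∑' m, pb n m * (c + f m) = ∑' m, (pb n m * c + pb n m * f m) :=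
            tsum_congr fun m => mul_add _ _ _
        _ = (∑' m, pb n m * c) + ∑' m, pb n m * f m := ENNReal.tsum_add
        _ = c + ∑' m, pb n m * f m := by rw [ENNReal.tsum_mul_right, hrowE n, one_mul]
    -- the pointwise sandwich
    have hsand : ∀ t n, (if πb n = 0 then 0 else ENNReal.ofReal (Ft t n))
        ≤ (t : ℝ≥0∞) * ENNReal.ofReal M + W2 t n := by
      intro t
      induction t with
      | zero =>
          intro n
          split_ifs
          · exact zero_le
          · rw [hFt0, ENNReal.ofReal_zero]; exact zero_le
      | succ t ih =>
          intro n
          by_cases hn : πb n = 0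
          · rw [if_pos hn]
            exact zero_le
          · rw [if_neg hn]
            have hkey := (hgood t n (haEfin t) hn).2.2
            have h1 : Ft (t+1) n ≤ Fb n + G n + Q t n := by
              have := abs_le.1 hkey
              linarith [this.2]
            have hQK := (hgood t n (haEfin t) hn).2.1
            have hKcong : K (fun m => ENNReal.ofReal (Ft t m)) n
                = K (fun m => if πb m = 0 then 0 else ENNReal.ofReal (Ft t m)) n := by
              simp only [hKdef]
              refine tsum_congr fun m => ?_
              by_cases hm : πb m = 0
              · simp only [if_pos hm, hpbdef]
                rw [hclosed n m hn hm]
                simp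
              · rw [if_neg hm]
            calc ENNReal.ofReal (Ft (t+1) n)
                ≤ ENNReal.ofReal ((Fb n + G n) + Q t n) := by
                  exact ENNReal.ofReal_le_ofReal (by linarith)
              _ = ENNReal.ofReal (Fb n + G n) + ENNReal.ofReal (Q t n) :=
                  ENNReal.ofReal_add (add_nonneg (hFbnn n) (hGnn n)) (hQnn t n)
              _ = (H1 n + H2 n) + K (fun m => if πb m = 0 then 0 else ENNReal.ofReal (Ft t m)) n := by
                  rw [hH12 n, hQK, hKcong]
              _ ≤ (H1 n + H2 n) + K (fun m => (t : ℝ≥0∞) * ENNReal.ofReal M + W2 t m) n := by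
                  refine add_le_add_right ?_ _
                  simp only [hKdef]
                  exact Summable.tsum_le_tsum (fun m => mul_le_mul_right (ih m) _)
                    ENNReal.summable ENNReal.summable
              _ = (H1 n + H2 n) + ((t : ℝ≥0∞) * ENNReal.ofReal M + K (W2 t) n) := by
                  rw [hKconst]
              _ ≤ (ENNReal.ofReal M + H2 n) + ((t : ℝ≥0∞) * ENNReal.ofReal M + K (W2 t) n) := by
                  exact add_le_add_left (add_le_add_left (hH1le n) _) _
              _ = ((t+1 : ℕ) : ℝ≥0∞) * ENNReal.ofReal M + (H2 n + K (W2 t) n) := by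
                  rw [Nat.cast_succ]; ring
              _ = ((t+1 : ℕ) : ℝ≥0∞) * ENNReal.ofReal M + W2 (t+1) n := by
                  rw [hW2S]
    -- weighted bound on W2
    have hW2b : ∀ t : ℕ, ∑' n, p n * W2 t n ≤ (t : ℝ≥0∞) * ENNReal.ofReal δ := by
      intro t
      induction t with
      | zero => simp [hW20]
      | succ t ih =>
          calc ∑' n, p n * W2 (t+1) n = ∑' n, (p n * H2 n + p n * K (W2 t) n) := by
                refine tsum_congr fun n => ?_
                rw [hW2S, mul_add]
            _ = (∑' n, p n * H2 n) + ∑' n, p n * K (W2 t) n := ENNReal.tsum_add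
            _ = (∑' n, p n * H2 n) + ∑' n, p n * W2 t n := by rw [hKstatE (W2 t)]
            _ ≤ ENNReal.ofReal δ + (t : ℝ≥0∞) * ENNReal.ofReal δ := add_le_add htailB ih
            _ = ((t+1 : ℕ) : ℝ≥0∞) * ENNReal.ofReal δ := by rw [Nat.cast_succ]; ring
    -- escape-of-mass bound
    have hesc : ∀ T : ℕ, aE T ≤ ENNReal.ofReal (∑ n ∈ A, πb n * Ft T n)
        + (T : ℝ≥0∞) * (ENNReal.ofReal M * ENNReal.ofReal δ' + ENNReal.ofReal δ) := by
      intro T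
      have h0 : aE T = ∑' n, p n * (if πb n = 0 then 0 else ENNReal.ofReal (Ft T n)) := by
        simp only [haEdef]
        refine tsum_congr fun n => ?_
        by_cases hn : πb n = 0
        · rw [hpzero n hn, zero_mul, zero_mul]
        · rw [if_neg hn]
      rw [h0, htsum_split (fun n => p n * (if πb n = 0 then 0 else ENNReal.ofReal (Ft T n))) A]
      have hA1 : (∑ n ∈ A, p n * (if πb n = 0 then 0 else ENNReal.ofReal (Ft T n)))
          ≤ ENNReal.ofReal (∑ n ∈ A, πb n * Ft T n) := by
        rw [ENNReal.ofReal_sum_of_nonneg (fun n _ => mul_nonneg (hπbnn n) (hFtnn T n))]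
        refine Finset.sum_le_sum fun n _ => ?_
        by_cases hn : πb n = 0
        · rw [hpzero n hn, zero_mul]
          exact zero_le
        · rw [if_neg hn, ENNReal.ofReal_mul (hπbnn n)]
      have hA2 : (∑' n, (if n ∈ A then 0 else
            p n * (if πb n = 0 then 0 else ENNReal.ofReal (Ft T n))))
          ≤ (T : ℝ≥0∞) * (ENNReal.ofReal M * ENNReal.ofReal δ' + ENNReal.ofReal δ) := by
        have hpt : ∀ n, (if n ∈ A then 0 else
              p n * (if πb n = 0 then 0 else ENNReal.ofReal (Ft T n)))
            ≤ (if n ∈ A then 0 else p n * ((T : ℝ≥0∞) * ENNReal.ofReal M))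
              + p n * W2 T n := by
          intro n
          by_cases hn : n ∈ A
          · simp only [if_pos hn]
            exact zero_le
          · simp only [if_neg hn]
            calc p n * (if πb n = 0 then 0 else ENNReal.ofReal (Ft T n))
                  ≤ p n * ((T : ℝ≥0∞) * ENNReal.ofReal M + W2 T n) :=
                    mul_le_mul_right (hsand T n) _
                _ = p n * ((T : ℝ≥0∞) * ENNReal.ofReal M) + p n * W2 T n := mul_add _ _ _
        calc (∑' n, (if n ∈ A then 0 else
              p n * (if πb n = 0 then 0 else ENNReal.ofReal (Ft T n))))
            ≤ ∑' n, ((if n ∈ A then 0 else p n * ((T : ℝ≥0∞) * ENNReal.ofReal M))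
              + p n * W2 T n) :=
              Summable.tsum_le_tsum hpt ENNReal.summable ENNReal.summable
          _ = (∑' n, (if n ∈ A then 0 else p n * ((T : ℝ≥0∞) * ENNReal.ofReal M)))
              + ∑' n, p n * W2 T n := ENNReal.tsum_add
          _ ≤ (∑' n, (if n ∈ A then 0 else p n)) * ((T : ℝ≥0∞) * ENNReal.ofReal M)
              + (T : ℝ≥0∞) * ENNReal.ofReal δ := by
              refine add_le_add ?_ (hW2b T)
              rw [← ENNReal.tsum_mul_right]
              refine le_of_eq (tsum_congr fun n => ?_)
              split_ifs
              · rw [zero_mul]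
              · rfl
          _ ≤ ENNReal.ofReal δ' * ((T : ℝ≥0∞) * ENNReal.ofReal M)
              + (T : ℝ≥0∞) * ENNReal.ofReal δ := by
              exact add_le_add_left (mul_le_mul_left hApc _) _
          _ = (T : ℝ≥0∞) * (ENNReal.ofReal M * ENNReal.ofReal δ' + ENNReal.ofReal δ) := by
              ring
      exact add_le_add hA1 hA2
    -- combine, divide by T and pass to the limit
    set C : ℝ := M * δ' + δ + Gbar with hCdef
    have hC0 : 0 ≤ C := by
      have : 0 ≤ M * δ' := mul_nonneg hM0 hδ'.le
      simp only [hCdef]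
      linarith [hGbarnn, hδ.le]
    have hcomb : ∀ T : ℕ, 1 ≤ T → Fbar ≤ (∑ n ∈ A, πb n * (Ft T n / T)) + C := by
      intro T hT
      have hTpos : (0:ℝ) < T := by exact_mod_cast hT
      have hE : ENNReal.ofReal ((T:ℝ) * Fbar)
          ≤ ENNReal.ofReal (∑ n ∈ A, πb n * Ft T n + (T:ℝ) * C) := by
        calc ENNReal.ofReal ((T:ℝ) * Fbar) = (T : ℝ≥0∞) * ENNReal.ofReal Fbar := by
              rw [ENNReal.ofReal_mul (Nat.cast_nonneg T), ENNReal.ofReal_natCast]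
          _ ≤ aE T + (T : ℝ≥0∞) * ENNReal.ofReal Gbar := hLn T
          _ ≤ (ENNReal.ofReal (∑ n ∈ A, πb n * Ft T n)
              + (T : ℝ≥0∞) * (ENNReal.ofReal M * ENNReal.ofReal δ' + ENNReal.ofReal δ))
              + (T : ℝ≥0∞) * ENNReal.ofReal Gbar := add_le_add_left (hesc T) _
          _ = ENNReal.ofReal (∑ n ∈ A, πb n * Ft T n)
              + (T : ℝ≥0∞) * (ENNReal.ofReal M * ENNReal.ofReal δ' + ENNReal.ofReal δ
                + ENNReal.ofReal Gbar) := by ring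
          _ = ENNReal.ofReal (∑ n ∈ A, πb n * Ft T n + (T:ℝ) * C) := by
              rw [← ENNReal.ofReal_mul hM0, ← ENNReal.ofReal_add (mul_nonneg hM0 hδ'.le) hδ.le,
                ← ENNReal.ofReal_add (add_nonneg (mul_nonneg hM0 hδ'.le) hδ.le) hGbarnn,
                ← hCdef]
              rw [← ENNReal.ofReal_natCast T, ← ENNReal.ofReal_mul (Nat.cast_nonneg T),
                ← ENNReal.ofReal_add (Finset.sum_nonneg fun n _ =>
                  mul_nonneg (hπbnn n) (hFtnn T n)) (by positivity)]
      have hreal : (T:ℝ) * Fbar ≤ ∑ n ∈ A, πb n * Ft T n + (T:ℝ) * C := by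
        refine (ENNReal.ofReal_le_ofReal_iff ?_).1 hE
        have : (0:ℝ) ≤ ∑ n ∈ A, πb n * Ft T n :=
          Finset.sum_nonneg fun n _ => mul_nonneg (hπbnn n) (hFtnn T n)
        positivity
      have hdiv : Fbar ≤ (∑ n ∈ A, πb n * Ft T n) / T + C := by
        rw [← sub_nonneg]
        have h2 : 0 ≤ ((∑ n ∈ A, πb n * Ft T n) + (T:ℝ) * C - (T:ℝ) * Fbar) / T :=
          div_nonneg (by linarith) hTpos.le
        calc (0:ℝ) ≤ ((∑ n ∈ A, πb n * Ft T n) + (T:ℝ) * C - (T:ℝ) * Fbar) / T := h2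
          _ = (∑ n ∈ A, πb n * Ft T n) / T + C - Fbar := by
              field_simp
      calc Fbar ≤ (∑ n ∈ A, πb n * Ft T n) / T + C := hdiv
        _ = (∑ n ∈ A, πb n * (Ft T n / T)) + C := by
            rw [Finset.sum_div]
            congr 1
            exact Finset.sum_congr rfl fun n _ => (mul_div_assoc _ _ _)
    have hlim : Fbar ≤ (∑ n ∈ A, πb n) * Fc + C := by
      have ht := (htendA A).add_const C
      exact ge_of_tendsto ht (Filter.eventually_atTop.2 ⟨1, fun T hT => hcomb T hT⟩)
    have hAle1 : (∑ n ∈ A, πb n) ≤ 1 := by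
      rw [← hπbsum]
      exact Summable.sum_le_tsum A (fun n _ => hπbnn n) hπbS
    have hfc : (∑ n ∈ A, πb n) * Fc ≤ Fc := mul_le_of_le_one_left hFcnn hAle1
    have hMδ' : M * δ' ≤ δ := by
      rw [hδ'def, mul_div_assoc']
      rw [div_le_iff₀ (by linarith : (0:ℝ) < M + 1)]
      nlinarith
    calc Fbar ≤ (∑ n ∈ A, πb n) * Fc + C := hlim
      _ ≤ Fc + C := by linarith
      _ ≤ Fc + Gbar + ε := by
          simp only [hCdef]
          rw [hδdef] at hMδ' ⊢
          linarith
  rw [abs_sub_le_iff]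
  constructor <;> linarith
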